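/- Let L be a finite field of order q and s an invertible exponent whose Weil sum is three-valued on L^× with values 0, A, B, where A = p^a α, B = p^b β, A - B = p^c γ with p ∤ αβγ. Then α, β, γ are pairwise coprime, αγ divides q - B, and βγ divides q - A. -/

import Mathlib

open Finset

/-- The canonical additive character of a finite field of characteristic `p`:
`μ(x) = exp(2πi · Tr(x)/p)` where `Tr` is the absolute trace to `F_p`. -/
noncomputable def mu (p : ℕ) {L : Type*} [Field L] [Fintype L] [Algebra (ZMod p) L] (x : L) : ℂ :=
  Complex.exp (2 * Real.pi * Complex.I * ((Algebra.trace (ZMod p) L x).val : ℂ) / p)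

section Aux

private lemma exp_mod (p : ℕ) (m : ℕ) :
    Complex.exp (2 * Real.pi * Complex.I * ((m % p : ℕ) : ℂ) / p)
      = Complex.exp (2 * Real.pi * Complex.I * (m : ℂ) / p) := by
  rcases eq_or_ne p 0 with rfl | hp
  · simp
  have hpc : (p : ℂ) ≠ 0 := Nat.cast_ne_zero.mpr hp
  have h' : (m : ℂ) = ((m % p : ℕ) : ℂ) + ((m / p : ℕ) : ℂ) * p := by
    exact_mod_cast (Nat.mod_add_div' m p).symm
  rw [h']
  have split : 2 * Real.pi * Complex.I * (((m % p : ℕ) : ℂ) + ((m / p : ℕ) : ℂ) * p) / p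
      = 2 * Real.pi * Complex.I * ((m % p : ℕ) : ℂ) / p
        + ((m / p : ℕ) : ℂ) * (2 * Real.pi * Complex.I) := by
    field_simp
  rw [split, Complex.exp_add]
  have e1 : Complex.exp (((m / p : ℕ) : ℂ) * (2 * Real.pi * Complex.I)) = 1 := by
    simpa using Complex.exp_int_mul_two_pi_mul_I (m / p : ℕ)
  rw [e1, mul_one]

variable (p : ℕ) [Fact p.Prime] (L : Type*) [Field L] [Fintype L] [CharP L p]
    [Algebra (ZMod p) L]

/-- `mu` as an additive character. -/
noncomputable def muChar : AddChar L ℂ where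
  toFun := mu p
  map_zero_eq_one' := by
    haveI : NeZero p := ⟨(Fact.out : p.Prime).ne_zero⟩
    simp [mu]
  map_add_eq_mul' := by
    intro x y
    haveI : NeZero p := ⟨(Fact.out : p.Prime).ne_zero⟩
    show mu p (x + y) = mu p x * mu p y
    simp only [mu, map_add]
    rw [ZMod.val_add, exp_mod, ← Complex.exp_add]
    congr 1
    push_cast
    ring

lemma muChar_apply (x : L) : muChar p L x = mu p x := rfl

lemma muChar_ne_one : muChar p L ≠ 1 := by
  have hch : p = ringChar L := (ringChar.eq L p).symm
  subst hch
  haveI hp : Fact (ringChar L).Prime := ‹_›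
  haveI : NeZero (ringChar L) := ⟨hp.out.ne_zero⟩
  obtain ⟨b, hb⟩ := FiniteField.trace_to_zmod_nondegenerate L (one_ne_zero (α := L))
  rw [one_mul] at hb
  intro h
  have hval : (Algebra.trace (ZMod (ringChar L)) L b).val ≠ 0 := by
    simpa [ZMod.val_eq_zero] using hb
  have h1 : mu (ringChar L) b = 1 := by
    have := congrArg (fun ψ : AddChar L ℂ => ψ b) h
    simpa [muChar_apply] using this
  rw [mu] at h1
  obtain ⟨n, hn⟩ := Complex.exp_eq_one_iff.mp h1
  set v := (Algebra.trace (ZMod (ringChar L)) L b).val with hv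
  have hpc : ((ringChar L : ℂ)) ≠ 0 := Nat.cast_ne_zero.mpr hp.out.ne_zero
  rw [div_eq_iff hpc] at hn
  have h2 : (v : ℂ) = ((n * (ringChar L : ℤ) : ℤ) : ℂ) := by
    have h2πI : (2 * (Real.pi : ℂ) * Complex.I) ≠ 0 := by
      simp [Real.pi_ne_zero, Complex.I_ne_zero, Complex.ofReal_ne_zero]
    apply mul_left_cancel₀ h2πI
    push_cast
    linear_combination hn
  have h3 : (v : ℤ) = n * (ringChar L : ℤ) := by exact_mod_cast h2
  have hdvd : ((ringChar L : ℤ)) ∣ (v : ℤ) := ⟨n, by rw [h3]; ring⟩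
  have hle := Int.le_of_dvd (by exact_mod_cast Nat.pos_of_ne_zero hval) hdvd
  have hlt : v < ringChar L := ZMod.val_lt _
  have : (ringChar L : ℤ) < (ringChar L : ℤ) := lt_of_le_of_lt hle (by exact_mod_cast hlt)
  exact absurd this (lt_irrefl _)

lemma sum_muChar : ∑ x : L, muChar p L x = 0 :=
  AddChar.sum_eq_zero_of_ne_one (muChar_ne_one p L)

open scoped Classical in
lemma sum_muChar_mul (c : L) :
    ∑ a : L, muChar p L (a * c) = if c = 0 then (Fintype.card L : ℂ) else 0 := by
  classical
  rw [AddChar.sum_mulShift c (AddChar.IsPrimitive.of_ne_one (muChar_ne_one p L))]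
  split_ifs <;> simp

lemma sumW (s : ℕ) (hs : s ≠ 0) :
    ∑ a : L, ∑ x : L, mu p (x ^ s - a * x) = (Fintype.card L : ℂ) := by
  classical
  have h1 : ∀ a x : L, mu p (x ^ s - a * x) = muChar p L (x ^ s) * muChar p L (a * (-x)) := by
    intro a x
    rw [← AddChar.map_add_eq_mul, muChar_apply]
    congr 1
    ring
  rw [Finset.sum_comm]
  have key : ∀ x : L, ∑ a : L, mu p (x ^ s - a * x)
      = if x = 0 then (Fintype.card L : ℂ) else 0 := by
    intro x
    calc ∑ a : L, mu p (x ^ s - a * x)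
        = ∑ a : L, muChar p L (x ^ s) * muChar p L (a * (-x)) :=
          Finset.sum_congr rfl fun a _ => h1 a x
      _ = muChar p L (x ^ s) * ∑ a : L, muChar p L (a * (-x)) := by rw [Finset.mul_sum]
      _ = muChar p L (x ^ s) * (if (-x) = 0 then (Fintype.card L : ℂ) else 0) := by
          rw [sum_muChar_mul p L (-x)]
      _ = if x = 0 then (Fintype.card L : ℂ) else 0 := by
          rcases eq_or_ne x 0 with h | h
          · simp [h, zero_pow hs]
          · simp [h, neg_eq_zero]
  rw [Finset.sum_congr rfl fun x _ => key x]
  simp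

lemma sumWsq (s : ℕ) (hneg : ∀ x : L, x ^ s + (-x) ^ s = 0) :
    ∑ a : L, (∑ x : L, mu p (x ^ s - a * x)) ^ 2 = (Fintype.card L : ℂ) ^ 2 := by
  classical
  have expand : ∀ a : L, (∑ x : L, mu p (x ^ s - a * x)) ^ 2
      = ∑ x : L, ∑ y : L, muChar p L (x ^ s + y ^ s) * muChar p L (a * (-(x + y))) := by
    intro a
    rw [sq, Finset.sum_mul_sum]
    refine Finset.sum_congr rfl fun x _ => Finset.sum_congr rfl fun y _ => ?_
    show muChar p L (x ^ s - a * x) * muChar p L (y ^ s - a * y) = _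
    rw [← AddChar.map_add_eq_mul, ← AddChar.map_add_eq_mul]
    congr 1
    ring
  calc ∑ a : L, (∑ x : L, mu p (x ^ s - a * x)) ^ 2
      = ∑ a : L, ∑ x : L, ∑ y : L,
          muChar p L (x ^ s + y ^ s) * muChar p L (a * (-(x + y))) :=
        Finset.sum_congr rfl fun a _ => expand a
    _ = ∑ x : L, ∑ y : L, ∑ a : L,
          muChar p L (x ^ s + y ^ s) * muChar p L (a * (-(x + y))) := by
        rw [Finset.sum_comm]
        exact Finset.sum_congr rfl fun x _ => Finset.sum_comm
    _ = ∑ x : L, ∑ y : L,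
          muChar p L (x ^ s + y ^ s) * (if (-(x + y)) = 0 then (Fintype.card L : ℂ) else 0) := by
        refine Finset.sum_congr rfl fun x _ => Finset.sum_congr rfl fun y _ => ?_
        rw [← Finset.mul_sum, sum_muChar_mul p L]
    _ = ∑ _x : L, (Fintype.card L : ℂ) := by
        refine Finset.sum_congr rfl fun x _ => ?_
        have hpt : ∀ y : L, muChar p L (x ^ s + y ^ s)
            * (if (-(x + y)) = 0 then (Fintype.card L : ℂ) else 0)
            = if y = -x then (Fintype.card L : ℂ) else 0 := by
          intro y
          rcases eq_or_ne y (-x) with h | h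
          · simp [h, hneg x]
          · have hne : -(x + y) ≠ 0 := by
              intro hc
              exact h (by
                have hxy : x + y = 0 := neg_eq_zero.mp hc
                linear_combination hxy)
            rw [if_neg hne, mul_zero, if_neg h]
        rw [Finset.sum_congr rfl fun y _ => hpt y]
        simp
    _ = (Fintype.card L : ℂ) ^ 2 := by
        rw [Finset.sum_const, Finset.card_univ, nsmul_eq_mul, sq]

lemma pow_bij (s : ℕ) (hs : s ≠ 0) (hcop : Nat.Coprime s (Fintype.card L - 1)) :
    Function.Bijective fun x : L => x ^ s := by
  classical
  refine Finite.injective_iff_bijective.mp ?_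
  intro x y hxy
  simp only at hxy
  rcases eq_or_ne x 0 with rfl | hx
  · have : y ^ s = 0 := by rw [← hxy, zero_pow hs]
    exact ((pow_eq_zero_iff hs).mp this).symm
  · have hy : y ≠ 0 := by
      intro h
      subst h
      exact hx ((pow_eq_zero_iff hs).mp (by rw [hxy, zero_pow hs]))
    have hcop' : Nat.Coprime (Nat.card Lˣ) s := by
      rw [Nat.card_eq_fintype_card, Fintype.card_units]
      exact hcop.symm
    have hu : (Units.mk0 x hx) ^ s = (Units.mk0 y hy) ^ s := by
      apply Units.ext
      simpa using hxy
    have h2 : Units.mk0 x hx = Units.mk0 y hy :=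
      (powCoprime hcop').injective (by rw [powCoprime_apply, powCoprime_apply]; exact hu)
    simpa using congrArg Units.val h2

lemma W_zero (s : ℕ) (hs : s ≠ 0) (hcop : Nat.Coprime s (Fintype.card L - 1)) :
    ∑ x : L, mu p (x ^ s - (0 : L) * x) = 0 := by
  have h1 : ∀ x : L, mu p (x ^ s - (0 : L) * x) = muChar p L (x ^ s) := by
    intro x
    rw [muChar_apply]
    congr 1
    ring
  rw [Finset.sum_congr rfl fun x _ => h1 x]
  rw [show ∑ x : L, muChar p L (x ^ s) = ∑ y : L, muChar p L y from
    Fintype.sum_bijective _ (pow_bij L s hs hcop) _ _ fun x => rfl]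
  exact sum_muChar p L

/-- Pure arithmetic: `IsCoprime p x` from non-divisibility. -/
lemma isCoprime_p (p : ℕ) (hp : p.Prime) {x : ℤ} (hx : ¬(p : ℤ) ∣ x) :
    IsCoprime (p : ℤ) x := by
  rw [Int.isCoprime_iff_gcd_eq_one]
  have hnd : ¬ p ∣ x.natAbs := by
    intro h
    exact hx (Int.natAbs_dvd_natAbs.mp (by simpa using h))
  have : Nat.Coprime p x.natAbs := (Nat.Prime.coprime_iff_not_dvd hp).mpr hnd
  simpa [Int.gcd] using this

lemma gcd_eq_one_of_dvd_pow (p : ℕ) (hp : p.Prime) {x y : ℤ} {e : ℕ} (hx : ¬(p : ℤ) ∣ x)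
    (h : (Int.gcd x y : ℤ) ∣ (p : ℤ) ^ e) : Int.gcd x y = 1 := by
  set g := Int.gcd x y with hg
  have hgn : g ∣ p ^ e := by
    have h' : (g : ℤ) ∣ ((p ^ e : ℕ) : ℤ) := by push_cast; exact h
    exact_mod_cast h'
  have hpg : ¬ p ∣ g := by
    intro hd
    exact hx (dvd_trans (Int.natCast_dvd_natCast.mpr hd) (Int.gcd_dvd_left _ _))
  have hco : Nat.Coprime (p ^ e) g := ((Nat.Prime.coprime_iff_not_dvd hp).mpr hpg).pow_left e
  exact Nat.Coprime.eq_one_of_dvd hco.symm hgn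

lemma arith (p : ℕ) (hp : p.Prime) (e : ℕ) (q A B : ℤ) (NA NB : ℕ)
    (hq : q = (p : ℤ) ^ e)
    (h1 : (NA : ℤ) * A + (NB : ℤ) * B = q) (h2 : (NA : ℤ) * A ^ 2 + (NB : ℤ) * B ^ 2 = q ^ 2)
    (a b c : ℕ) (α β γ : ℤ) (hα : ¬ (p : ℤ) ∣ α) (hβ : ¬ (p : ℤ) ∣ β) (hγ : ¬ (p : ℤ) ∣ γ)
    (hAa : A = (p : ℤ) ^ a * α) (hBb : B = (p : ℤ) ^ b * β) (hCc : A - B = (p : ℤ) ^ c * γ) :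
    Int.gcd α β = 1 ∧ Int.gcd α γ = 1 ∧ Int.gcd β γ = 1 ∧
      (α * γ) ∣ (q - B) ∧ (β * γ) ∣ (q - A) := by
  have key1 : (NA : ℤ) * (A * (A - B)) = q * (q - B) := by linear_combination h2 - B * h1
  have key2 : (NB : ℤ) * (B * (B - A)) = q * (q - A) := by linear_combination h2 - A * h1
  have hqdvd : ∀ d : ℤ, d ∣ A → d ∣ B → d ∣ q := by
    intro d hdA hdB
    rw [← h1]
    exact dvd_add (hdA.mul_left _) (hdB.mul_left _)
  have hgab : Int.gcd α β = 1 := by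
    refine gcd_eq_one_of_dvd_pow p hp (e := e) hα ?_
    rw [← hq]
    refine hqdvd _ ?_ ?_
    · rw [hAa]; exact (Int.gcd_dvd_left _ _).mul_left _
    · rw [hBb]; exact (Int.gcd_dvd_right _ _).mul_left _
  have hgag : Int.gcd α γ = 1 := by
    refine gcd_eq_one_of_dvd_pow p hp (e := e) hα ?_
    rw [← hq]
    have hdA : (Int.gcd α γ : ℤ) ∣ A := by rw [hAa]; exact (Int.gcd_dvd_left _ _).mul_left _
    have hdAB : (Int.gcd α γ : ℤ) ∣ A - B := by
      rw [hCc]; exact (Int.gcd_dvd_right _ _).mul_left _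
    exact hqdvd _ hdA (by have := dvd_sub hdA hdAB; simpa using this)
  have hgbg : Int.gcd β γ = 1 := by
    refine gcd_eq_one_of_dvd_pow p hp (e := e) hβ ?_
    rw [← hq]
    have hdB : (Int.gcd β γ : ℤ) ∣ B := by rw [hBb]; exact (Int.gcd_dvd_left _ _).mul_left _
    have hdAB : (Int.gcd β γ : ℤ) ∣ A - B := by
      rw [hCc]; exact (Int.gcd_dvd_right _ _).mul_left _
    exact hqdvd _ (by have := dvd_add hdAB hdB; simpa using this) hdB
  have hcopAG : IsCoprime (α * γ) q := by
    rw [hq]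
    exact (IsCoprime.mul_left (isCoprime_p p hp hα).symm (isCoprime_p p hp hγ).symm).pow_right
  have hcopBG : IsCoprime (β * γ) q := by
    rw [hq]
    exact (IsCoprime.mul_left (isCoprime_p p hp hβ).symm (isCoprime_p p hp hγ).symm).pow_right
  have hdiv1 : (α * γ) ∣ (q - B) := by
    have hAA : (α * γ) ∣ A * (A - B) := ⟨(p : ℤ) ^ a * (p : ℤ) ^ c, by rw [hCc, hAa]; ring⟩
    have hmul : (α * γ) ∣ q * (q - B) := key1 ▸ hAA.mul_left (NA : ℤ)
    exact hcopAG.dvd_of_dvd_mul_left hmul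
  have hdiv2 : (β * γ) ∣ (q - A) := by
    have hBA : B - A = (p : ℤ) ^ c * (-γ) := by linear_combination -hCc
    have hBB : (β * γ) ∣ B * (B - A) :=
      ⟨-((p : ℤ) ^ b * (p : ℤ) ^ c), by rw [hBA, hBb]; ring⟩
    have hmul : (β * γ) ∣ q * (q - A) := key2 ▸ hBB.mul_left (NB : ℤ)
    exact hcopBG.dvd_of_dvd_mul_left hmul
  exact ⟨hgab, hgag, hgbg, hdiv1, hdiv2⟩

end Aux

theorem stmt_18 (p : ℕ) [Fact p.Prime] (L : Type*) [Field L] [Fintype L] [CharP L p]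
    [Algebra (ZMod p) L] (s : ℕ) (hcop : Nat.Coprime s (Fintype.card L - 1))
    (A B : ℤ) (hA : A ≠ 0) (hB : B ≠ 0) (hAB : A ≠ B)
    (hW : {w : ℂ | ∃ a : L, a ≠ 0 ∧ ∑ x : L, mu p (x ^ s - a * x) = w}
            = {0, (A : ℂ), (B : ℂ)})
    (a b c : ℕ) (α β γ : ℤ) (hα : ¬ (p : ℤ) ∣ α) (hβ : ¬ (p : ℤ) ∣ β) (hγ : ¬ (p : ℤ) ∣ γ)
    (hAa : A = (p : ℤ) ^ a * α) (hBb : B = (p : ℤ) ^ b * β) (hCc : A - B = (p : ℤ) ^ c * γ) :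
    Int.gcd α β = 1 ∧ Int.gcd α γ = 1 ∧ Int.gcd β γ = 1 ∧
      (α * γ) ∣ ((Fintype.card L : ℤ) - B) ∧ (β * γ) ∣ ((Fintype.card L : ℤ) - A) := by
  classical
  haveI hp : Fact p.Prime := ‹_›
  set W : L → ℂ := fun a => ∑ x : L, mu p (x ^ s - a * x) with hWdef
  -- every value on L^× is 0, A, or B
  have hval : ∀ a : L, a ≠ 0 → W a = 0 ∨ W a = (A : ℂ) ∨ W a = (B : ℂ) := by
    intro a ha
    have hmem : W a ∈ {w : ℂ | ∃ a : L, a ≠ 0 ∧ ∑ x : L, mu p (x ^ s - a * x) = w} :=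
      ⟨a, ha, rfl⟩
    rw [hW] at hmem
    simpa [Set.mem_insert_iff] using hmem
  -- dispatch the degenerate case s = 0
  rcases eq_or_ne s 0 with hs0 | hs
  · exfalso
    have hmemA : (A : ℂ) ∈ {w : ℂ | ∃ a : L, a ≠ 0 ∧ ∑ x : L, mu p (x ^ s - a * x) = w} := by
      rw [hW]
      exact Set.mem_insert_iff.mpr (Or.inr (Or.inl rfl))
    obtain ⟨a0, ha0, hWa⟩ := hmemA
    have hzero : ∑ x : L, mu p (x ^ s - a0 * x) = 0 := by
      subst hs0
      have hbij : Function.Bijective (fun x : L => 1 - a0 * x) := by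
        refine Finite.injective_iff_bijective.mp ?_
        intro u v huv
        simp only at huv
        have h1 : a0 * u = a0 * v := by
          have := sub_right_injective huv
          exact this
        exact mul_left_cancel₀ ha0 h1
      calc ∑ x : L, mu p (x ^ 0 - a0 * x) = ∑ x : L, muChar p L (1 - a0 * x) := by
            refine Finset.sum_congr rfl fun x _ => ?_
            rw [muChar_apply, pow_zero]
        _ = ∑ y : L, muChar p L y := Fintype.sum_bijective _ hbij _ _ fun x => rfl
        _ = 0 := sum_muChar p L
    rw [hWa] at hzero
    exact hA (by exact_mod_cast hzero)
  -- main case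
  have hodd : ∀ x : L, x ^ s + (-x) ^ s = 0 := by
    by_cases hp2 : p = 2
    · subst hp2
      intro x
      rw [CharTwo.neg_eq, CharTwo.add_self_eq_zero]
    · have hodds : Odd s := by
        have hp_odd : Odd p := hp.out.odd_of_ne_two hp2
        obtain ⟨e, hpe, hq⟩ := FiniteField.card L p
        have hq_odd : Odd (Fintype.card L) := hq ▸ hp_odd.pow
        obtain ⟨k, hk⟩ := hq_odd
        have h2 : 2 ∣ (Fintype.card L - 1) := by omega
        rcases Nat.even_or_odd s with he | ho
        · exfalso
          have h2s : 2 ∣ s := he.two_dvd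
          have := Nat.dvd_gcd h2s h2
          rw [hcop] at this
          omega
        · exact ho
      intro x
      rw [hodds.neg_pow]
      ring
  have hW0 : W 0 = 0 := W_zero p L s hs hcop
  have hsum1 : ∑ a ∈ Finset.univ.erase (0 : L), W a = (Fintype.card L : ℂ) := by
    have h := sumW p L s hs
    have hsplit := Finset.sum_erase_add Finset.univ W (Finset.mem_univ (0 : L))
    rw [hW0, add_zero] at hsplit
    exact hsplit.trans h
  have hsum2 : ∑ a ∈ Finset.univ.erase (0 : L), (W a) ^ 2 = (Fintype.card L : ℂ) ^ 2 := by
    have h := sumWsq p L s hodd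
    have hsplit : ∑ a ∈ Finset.univ.erase (0 : L), (W a) ^ 2 + (W 0) ^ 2 = ∑ a : L, (W a) ^ 2 :=
      Finset.sum_erase_add Finset.univ (fun a => (W a) ^ 2) (Finset.mem_univ (0 : L))
    rw [hW0, show ((0 : ℂ)) ^ 2 = 0 by norm_num, add_zero] at hsplit
    exact hsplit.trans h
  set S : Finset L := Finset.univ.erase 0 with hS
  set SA : Finset L := S.filter (fun a => W a = (A : ℂ)) with hSA
  set SB : Finset L := S.filter (fun a => ¬ W a = (A : ℂ) ∧ W a = (B : ℂ)) with hSB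
  have count : ∀ g : ℂ → ℂ, g 0 = 0 →
      ∑ a ∈ S, g (W a) = (SA.card : ℂ) * g (A : ℂ) + (SB.card : ℂ) * g (B : ℂ) := by
    intro g hg0
    rw [← Finset.sum_filter_add_sum_filter_not S (fun a => W a = (A : ℂ)) (fun a => g (W a))]
    have hA_part : ∑ a ∈ S.filter (fun a => W a = (A : ℂ)), g (W a)
        = (SA.card : ℂ) * g (A : ℂ) := by
      rw [Finset.sum_congr rfl (fun a ha => by rw [(Finset.mem_filter.mp ha).2]),
        Finset.sum_const, nsmul_eq_mul, hSA]
    have hrest : ∑ a ∈ S.filter (fun a => ¬ W a = (A : ℂ)), g (W a)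
        = (SB.card : ℂ) * g (B : ℂ) := by
      rw [← Finset.sum_filter_add_sum_filter_not (S.filter (fun a => ¬ W a = (A : ℂ)))
        (fun a => W a = (B : ℂ)) (fun a => g (W a))]
      have hB_part : ∑ a ∈ (S.filter (fun a => ¬ W a = (A : ℂ))).filter
          (fun a => W a = (B : ℂ)), g (W a) = (SB.card : ℂ) * g (B : ℂ) := by
        rw [Finset.filter_filter]
        rw [Finset.sum_congr rfl (fun a ha => by rw [(Finset.mem_filter.mp ha).2.2]),
          Finset.sum_const, nsmul_eq_mul, hSB]
      have hzero_part : ∑ a ∈ (S.filter (fun a => ¬ W a = (A : ℂ))).filter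
          (fun a => ¬ W a = (B : ℂ)), g (W a) = 0 := by
        refine Finset.sum_eq_zero fun x hx => ?_
        rw [Finset.filter_filter] at hx
        obtain ⟨hxS, hxnA, hxnB⟩ := Finset.mem_filter.mp hx
        have hx0 : x ≠ 0 := (Finset.mem_erase.mp hxS).1
        rcases hval x hx0 with h0 | hA' | hB'
        · rw [h0, hg0]
        · exact absurd hA' hxnA
        · exact absurd hB' hxnB
      rw [hB_part, hzero_part, add_zero]
    rw [hA_part, hrest]
  have hC1 : (SA.card : ℂ) * (A : ℂ) + (SB.card : ℂ) * (B : ℂ) = (Fintype.card L : ℂ) := by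
    have := count (fun w => w) rfl
    rw [← this]
    exact hsum1
  have hC2 : (SA.card : ℂ) * (A : ℂ) ^ 2 + (SB.card : ℂ) * (B : ℂ) ^ 2
      = (Fintype.card L : ℂ) ^ 2 := by
    have := count (fun w => w ^ 2) (by norm_num)
    rw [← this]
    exact hsum2
  obtain ⟨e, hpe, hq⟩ := FiniteField.card L p
  have h1ℤ : (SA.card : ℤ) * A + (SB.card : ℤ) * B = (Fintype.card L : ℤ) := by
    have := hC1
    exact_mod_cast this
  have h2ℤ : (SA.card : ℤ) * A ^ 2 + (SB.card : ℤ) * B ^ 2 = (Fintype.card L : ℤ) ^ 2 := by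
    have := hC2
    exact_mod_cast this
  have hqℤ : (Fintype.card L : ℤ) = (p : ℤ) ^ (e : ℕ) := by exact_mod_cast hq
  exact arith p hp.out e (Fintype.card L : ℤ) A B SA.card SB.card hqℤ h1ℤ h2ℤ
    a b c α β γ hα hβ hγ hAa hBb hCc
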